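/- For all positive reals a and b, 15·S + 14·N1 − 14·P6 − 15·P4 ≥ 0, i.e. P4 + P6 − S ≤ (P6 + 14·N1)/15, where N1 = ((√a+√b)/2)², S = √((a²+b²)/2), P4 = 4ab/(√a+√b)², and P6 = (a²+b²)/(a+b). -/

import Mathlib

theorem stmt_4 (a b : ℝ) (ha : 0 < a) (hb : 0 < b) :
    let N1 := ((Real.sqrt a + Real.sqrt b)/2)^2
    let S := Real.sqrt ((a^2+b^2)/2)
    let P4 := 4*a*b/(Real.sqrt a + Real.sqrt b)^2
    let P6 := (a^2+b^2)/(a+b)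
    15*S + 14*N1 - 14*P6 - 15*P4 ≥ 0 := by
  intro N1 S P4 P6
  set x := Real.sqrt a with hxdef
  set y := Real.sqrt b with hydef
  have hx : 0 < x := Real.sqrt_pos.2 ha
  have hy : 0 < y := Real.sqrt_pos.2 hb
  have hxa : a = x^2 := (Real.sq_sqrt ha.le).symm
  have hyb : b = y^2 := (Real.sq_sqrt hb.le).symm
  have hS0 : 0 ≤ S := Real.sqrt_nonneg _
  have hS2 : S^2 = (a^2+b^2)/2 := Real.sq_sqrt (by positivity)
  have hxy : (0:ℝ) < x + y := by linarith
  have hab : (0:ℝ) < a + b := by linarith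
  have hR : 14*P6 + 15*P4 - 14*N1 =
      (56*(x^4+y^4)*(x+y)^2 + 240*x^2*y^2*(x^2+y^2) - 14*(x+y)^4*(x^2+y^2))
        / (4*(x+y)^2*(x^2+y^2)) := by
    have h1 : x^2 + y^2 > 0 := by positivity
    simp only [N1, P4, P6]
    rw [hxa, hyb]
    rw [Real.sqrt_sq hx.le, Real.sqrt_sq hy.le]
    field_simp
    ring
  have key : (14*P6 + 15*P4 - 14*N1)^2 ≤ 225 * ((a^2+b^2)/2) := by
    rw [hR, hxa, hyb, div_pow, div_le_iff₀ (by positivity)]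
    have id1 : 225 * ((((x:ℝ)^2)^2+(y^2)^2)/2) * (4*(x+y)^2*(x^2+y^2))^2
        - (56*(x^4+y^4)*(x+y)^2 + 240*x^2*y^2*(x^2+y^2) - 14*(x+y)^4*(x^2+y^2))^2
        = 38400*(x-y)^2*(x*y)^5 + 57920*(x-y)^4*(x*y)^4 + 57280*(x-y)^6*(x*y)^3
          + 21536*(x-y)^8*(x*y)^2 + 2928*(x-y)^10*(x*y) + 36*(x-y)^12 := by
      ring
    nlinarith [sq_nonneg (x-y), mul_pos hx hy, pow_pos (mul_pos hx hy) 5,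
      mul_nonneg (sq_nonneg (x-y)) (pow_pos (mul_pos hx hy) 5).le,
      mul_nonneg (pow_nonneg (sq_nonneg (x-y)) 2) (pow_pos (mul_pos hx hy) 4).le,
      mul_nonneg (pow_nonneg (sq_nonneg (x-y)) 3) (pow_pos (mul_pos hx hy) 3).le,
      mul_nonneg (pow_nonneg (sq_nonneg (x-y)) 4) (pow_pos (mul_pos hx hy) 2).le,
      mul_nonneg (pow_nonneg (sq_nonneg (x-y)) 5) (mul_pos hx hy).le,
      pow_nonneg (sq_nonneg (x-y)) 6]
    
  nlinarith [key, hS0, hS2, sq_nonneg (15*S - (14*P6 + 15*P4 - 14*N1))]
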